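/- Discrete Schrödinger system with killing: let Q be an n×n matrix with strictly positive entries, r a strictly positive vector in ℝⁿ, ρ₀ a strictly positive probability vector, ρ₁ a strictly positive vector with Σᵢ ρ₁ᵢ < 1, and set c₁ = 1 − Σᵢ ρ₁ᵢ > 0. Then there exists a 4-tuple of strictly positive quantities (φ̂₁ ∈ ℝⁿ, ψ̂₁ ∈ ℝ, φ₀ ∈ ℝⁿ, ψ₀ ∈ ℝ), unique up to a common positive scaling (φ̂₁, ψ̂₁) ↦ (cφ̂₁, cψ̂₁), (φ₀, ψ₀) ↦ (c⁻¹φ₀, c⁻¹ψ₀), satisfying: φ̂₁ = Qᵀ(ρ₀/φ₀), ψ̂₁ = ⟨ρ₀/φ₀, r⟩, φ₀ = Q(ρ₁/φ̂₁) + (c₁/ψ̂₁)·r, and ψ₀ = c₁/ψ̂₁. -/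

import Mathlib

open Matrix Finset
open Real


/-- Uniqueness of matrix scalings: if two positive scalings of a positive matrix have the
same row and column sums, the scaling vectors agree up to a reciprocal constant. -/
lemma scaling_unique {n m : ℕ} (hn : 0 < n) (hm : 0 < m)
    (M : Fin n → Fin m → ℝ) (hM : ∀ i j, 0 < M i j)
    (a a' : Fin n → ℝ) (b b' : Fin m → ℝ) (ha : ∀ i, 0 < a i) (hb : ∀ j, 0 < b j)
    (ha' : ∀ i, 0 < a' i) (hb' : ∀ j, 0 < b' j)
    (hrow : ∀ i, ∑ j, a' i * M i j * b' j = ∑ j, a i * M i j * b j)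
    (hcol : ∀ j, ∑ i, a' i * M i j * b' j = ∑ i, a i * M i j * b j) :
    ∃ c : ℝ, 0 < c ∧ (∀ i, a' i = c * a i) ∧ (∀ j, b' j = c⁻¹ * b j) := by
  set f : Fin n → ℝ := fun i => a' i / a i with hf
  set g : Fin m → ℝ := fun j => b' j / b j with hg
  have hfpos : ∀ i, 0 < f i := fun i => div_pos (ha' i) (ha i)
  have hgpos : ∀ j, 0 < g j := fun j => div_pos (hb' j) (hb j)
  obtain ⟨iF, -, hiF⟩ := Finset.exists_max_image (univ : Finset (Fin n)) f
    ⟨⟨0, hn⟩, mem_univ _⟩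
  obtain ⟨jG, -, hjG⟩ := Finset.exists_min_image (univ : Finset (Fin m)) g
    ⟨⟨0, hm⟩, mem_univ _⟩
  set F := f iF with hF
  set G := g jG with hG
  have hFpos : 0 < F := hfpos iF
  have hGpos : 0 < G := hgpos jG
  have key : ∀ i j, a' i * M i j * b' j = (a i * M i j * b j) * (f i * g j) := by
    intro i j
    have h1 : a' i = f i * a i := by
      simp only [hf]; rw [div_mul_cancel₀ _ (ne_of_gt (ha i))]
    have h2 : b' j = g j * b j := by
      simp only [hg]; rw [div_mul_cancel₀ _ (ne_of_gt (hb j))]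
    rw [h1, h2]; ring
  -- F*G ≤ 1 from the row at iF
  have hrowF : ∑ j, (a iF * M iF j * b j) * (f iF * g j - 1) = 0 := by
    have := hrow iF
    simp only [key] at this
    have expand : ∑ j, (a iF * M iF j * b j) * (f iF * g j - 1)
        = ∑ j, (a iF * M iF j * b j) * (f iF * g j) - ∑ j, a iF * M iF j * b j := by
      rw [← Finset.sum_sub_distrib]; congr 1; ext j; ring
    rw [expand, this, sub_self]
  have hFG_le : F * G ≤ 1 := by
    by_contra hlt
    push_neg at hlt
    have : (0:ℝ) < ∑ j, (a iF * M iF j * b j) * (f iF * g j - 1) := by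
      apply Finset.sum_pos
      · intro j _
        apply mul_pos (mul_pos (mul_pos (ha iF) (hM iF j)) (hb j))
        have : F * G ≤ f iF * g j := by
          apply mul_le_mul le_rfl (hjG j (mem_univ j)) (le_of_lt hGpos) (le_of_lt hFpos)
        linarith
      · exact ⟨⟨0, hm⟩, mem_univ _⟩
    linarith [hrowF]
  -- F*G ≥ 1 from the column at jG
  have hcolG : ∑ i, (a i * M i jG * b jG) * (f i * g jG - 1) = 0 := by
    have := hcol jG
    simp only [key] at this
    have expand : ∑ i, (a i * M i jG * b jG) * (f i * g jG - 1)
        = ∑ i, (a i * M i jG * b jG) * (f i * g jG) - ∑ i, a i * M i jG * b jG := by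
      rw [← Finset.sum_sub_distrib]; congr 1; ext i; ring
    rw [expand, this, sub_self]
  have hFG_ge : 1 ≤ F * G := by
    by_contra hlt
    push_neg at hlt
    have : ∑ i, (a i * M i jG * b jG) * (f i * g jG - 1) < 0 := by
      apply Finset.sum_neg
      · intro i _
        have hneg : f i * g jG - 1 < 0 := by
          have : f i * g jG ≤ F * G := by
            apply mul_le_mul (hiF i (mem_univ i)) le_rfl (le_of_lt hGpos) (le_of_lt hFpos)
          linarith
        exact mul_neg_of_pos_of_neg (mul_pos (mul_pos (ha i) (hM i jG)) (hb jG)) hneg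
      · exact ⟨⟨0, hn⟩, mem_univ _⟩
    linarith [hcolG]
  have hFG : F * G = 1 := le_antisymm hFG_le hFG_ge
  -- equality case in row sum at iF forces g constant
  have hgconst : ∀ j, g j = G := by
    have hzero : ∀ j ∈ univ, (a iF * M iF j * b j) * (f iF * g j - 1) = 0 := by
      rw [← Finset.sum_eq_zero_iff_of_nonneg]
      · exact hrowF
      · intro j _
        apply mul_nonneg (le_of_lt (mul_pos (mul_pos (ha iF) (hM iF j)) (hb j)))
        have : F * G ≤ f iF * g j :=
          mul_le_mul le_rfl (hjG j (mem_univ j)) (le_of_lt hGpos) (le_of_lt hFpos)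
        linarith
    intro j
    have h0 := hzero j (mem_univ j)
    have hne : a iF * M iF j * b j ≠ 0 :=
      ne_of_gt (mul_pos (mul_pos (ha iF) (hM iF j)) (hb j))
    have : f iF * g j - 1 = 0 := by
      rcases mul_eq_zero.mp h0 with h | h
      · exact absurd h hne
      · exact h
    have hFgj : F * g j = 1 := by rw [hF] at *; linarith
    have : F * g j = F * G := by rw [hFgj, hFG]
    exact mul_left_cancel₀ (ne_of_gt hFpos) this
  -- now f is constant too, via each column
  have hfconst : ∀ i, f i = F := by
    intro i
    have hcolj : ∀ j, ∑ i, (a i * M i j * b j) * (f i * g j - 1) = 0 := by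
      intro j
      have := hcol j
      simp only [key] at this
      have expand : ∑ i, (a i * M i j * b j) * (f i * g j - 1)
          = ∑ i, (a i * M i j * b j) * (f i * g j) - ∑ i, a i * M i j * b j := by
        rw [← Finset.sum_sub_distrib]; congr 1; ext i; ring
      rw [expand, this, sub_self]
    set j0 : Fin m := ⟨0, hm⟩
    have h0 : ∀ i ∈ univ, (a i * M i j0 * b j0) * (1 - f i * g j0) = 0 := by
      rw [← Finset.sum_eq_zero_iff_of_nonneg]
      · have := hcolj j0
        have expand : ∑ i, (a i * M i j0 * b j0) * (1 - f i * g j0)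
            = - ∑ i, (a i * M i j0 * b j0) * (f i * g j0 - 1) := by
          rw [← Finset.sum_neg_distrib]; congr 1; ext i; ring
        rw [expand, this, neg_zero]
      · intro i _
        apply mul_nonneg (le_of_lt (mul_pos (mul_pos (ha i) (hM i j0)) (hb j0)))
        have hgj : g j0 = G := hgconst j0
        have : f i * g j0 ≤ F * G :=
          mul_le_mul (hiF i (mem_univ i)) (le_of_eq (hgconst j0)) (le_of_lt (hgpos j0))
            (le_of_lt hFpos)
        linarith
    have h0i := h0 i (mem_univ i)
    have hne : a i * M i j0 * b j0 ≠ 0 :=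
      ne_of_gt (mul_pos (mul_pos (ha i) (hM i j0)) (hb j0))
    have : 1 - f i * g j0 = 0 := by
      rcases mul_eq_zero.mp h0i with h | h
      · exact absurd h hne
      · exact h
    have hgj : g j0 = G := hgconst j0
    rw [hgj] at this
    have hfi : f i * G = F * G := by rw [hFG]; linarith
    exact mul_right_cancel₀ (ne_of_gt hGpos) hfi
  refine ⟨F, hFpos, fun i => ?_, fun j => ?_⟩
  · have h := hfconst i
    have hai : a' i = f i * a i := by
      simp only [hf]; rw [div_mul_cancel₀ _ (ne_of_gt (ha i))]
    rw [hai, h]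
  · have h := hgconst j
    have hGF : G = F⁻¹ := eq_inv_of_mul_eq_one_right hFG
    have hbj : b' j = g j * b j := by
      simp only [hg]; rw [div_mul_cancel₀ _ (ne_of_gt (hb j))]
    rw [hbj, h, hGF]

section ExistsAux

variable {n m : ℕ}

/-- Per-entry concavity bound for the entropy functional. -/
lemma entTerm_concave (c : ℝ) {x y t : ℝ} (hx : 0 ≤ x) (hy : 0 ≤ y)
    (ht0 : 0 ≤ t) (ht1 : t ≤ 1) :
    (1 - t) * (x * c + negMulLog x) + t * (y * c + negMulLog y)
      ≤ ((1 - t) * x + t * y) * c + negMulLog ((1 - t) * x + t * y) := by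
  have h := Real.concaveOn_negMulLog.2 (Set.mem_Ici.mpr hx) (Set.mem_Ici.mpr hy)
    (by linarith : (0:ℝ) ≤ 1 - t) ht0 (by ring)
  simp only [smul_eq_mul] at h
  nlinarith [h]

end ExistsAux

section ExistsMain

variable {n m : ℕ}

-- assume polyK, entF etc from exist.lean; re-declare here
def polyK (p : Fin n → ℝ) (q : Fin m → ℝ) : Set (Fin n → Fin m → ℝ) :=
  {P | (∀ i j, 0 ≤ P i j) ∧ (∀ i, ∑ j, P i j = p i) ∧ (∀ j, ∑ i, P i j = q j)}

noncomputable def entF (M : Fin n → Fin m → ℝ) (P : Fin n → Fin m → ℝ) : ℝ :=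
  ∑ i, ∑ j, (P i j * Real.log (M i j) + Real.negMulLog (P i j))

/-- Any maximizer of the entropy functional on the transportation polytope
has strictly positive entries. -/
lemma maximizer_pos (M : Fin n → Fin m → ℝ)
    (p : Fin n → ℝ) (q : Fin m → ℝ) (hp : ∀ i, 0 < p i) (hq : ∀ j, 0 < q j)
    (hpsum : ∑ i, p i = 1) (hqsum : ∑ j, q j = 1)
    (P : Fin n → Fin m → ℝ) (hPK : P ∈ polyK p q)
    (hmax : IsMaxOn (entF M) (polyK p q) P) : ∀ i j, 0 < P i j := by
  obtain ⟨hPnn, hProw, hPcol⟩ := hPK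
  by_contra hcon
  push_neg at hcon
  obtain ⟨i₀, j₀, hij₀⟩ := hcon
  have hP0 : P i₀ j₀ = 0 := le_antisymm hij₀ (hPnn i₀ j₀)
  set σ : Fin n → Fin m → ℝ := fun i j => p i * q j with hσ
  have hσpos : ∀ i j, 0 < σ i j := fun i j => mul_pos (hp i) (hq j)
  have hσK : σ ∈ polyK p q := by
    refine ⟨fun i j => le_of_lt (hσpos i j), fun i => ?_, fun j => ?_⟩
    · rw [← Finset.mul_sum, hqsum, mul_one]
    · simp only [hσ]
      rw [← Finset.sum_mul, hpsum, one_mul]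
  -- choose t
  set X : ℝ := (entF M P - entF M σ) / (σ i₀ j₀) with hX
  set t : ℝ := min (1/2) (Real.exp (-X - 1)) with ht
  have ht0 : 0 < t := lt_min (by norm_num) (Real.exp_pos _)
  have ht1 : t ≤ 1 := le_trans (min_le_left _ _) (by norm_num)
  have hlogt : Real.log t ≤ -X - 1 := by
    calc Real.log t ≤ Real.log (Real.exp (-X - 1)) :=
          Real.log_le_log ht0 (min_le_right _ _)
      _ = -X - 1 := Real.log_exp _
  set Pt : Fin n → Fin m → ℝ := fun i j => (1 - t) * P i j + t * σ i j with hPt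
  have hPtK : Pt ∈ polyK p q := by
    refine ⟨fun i j => ?_, fun i => ?_, fun j => ?_⟩
    · have := hPnn i j
      have := le_of_lt (hσpos i j)
      have h1t : (0:ℝ) ≤ 1 - t := by linarith
      positivity
    · simp only [hPt]
      rw [Finset.sum_add_distrib, ← Finset.mul_sum, ← Finset.mul_sum,
        hProw i, (hσK.2.1 i)]
      ring
    · simp only [hPt]
      rw [Finset.sum_add_distrib, ← Finset.mul_sum, ← Finset.mul_sum,
        hPcol j, (hσK.2.2 j)]
      ring
  -- the key lower bound
  have hkey : ∀ i j, (1 - t) * (P i j * Real.log (M i j) + negMulLog (P i j))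
      + t * (σ i j * Real.log (M i j) + negMulLog (σ i j))
      + (if i = i₀ ∧ j = j₀ then t * σ i₀ j₀ * (-Real.log t) else 0)
      ≤ Pt i j * Real.log (M i j) + negMulLog (Pt i j) := by
    intro i j
    simp only [hPt]
    by_cases hij : i = i₀ ∧ j = j₀
    · rw [if_pos hij]
      obtain ⟨hi', hj'⟩ := hij
      rw [hi', hj', hP0]
      rw [show (1 - t) * (0:ℝ) + t * σ i₀ j₀ = t * σ i₀ j₀ from by ring]
      simp only [negMulLog]
      apply le_of_eq
      rw [Real.log_mul (ne_of_gt ht0) (ne_of_gt (hσpos i₀ j₀))]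
      ring
    · rw [if_neg hij, add_zero]
      exact entTerm_concave (Real.log (M i j)) (hPnn i j) (le_of_lt (hσpos i j))
        (le_of_lt ht0) ht1
  have hsum : (1 - t) * entF M P + t * entF M σ + t * σ i₀ j₀ * (-Real.log t)
      ≤ entF M Pt := by
    have h1 : ∑ i, ∑ j, ((1 - t) * (P i j * Real.log (M i j) + negMulLog (P i j))
        + t * (σ i j * Real.log (M i j) + negMulLog (σ i j))
        + (if i = i₀ ∧ j = j₀ then t * σ i₀ j₀ * (-Real.log t) else 0))
        ≤ ∑ i, ∑ j, (Pt i j * Real.log (M i j) + negMulLog (Pt i j)) := by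
      apply Finset.sum_le_sum
      intro i _
      apply Finset.sum_le_sum
      intro j _
      exact hkey i j
    have e1 : ∀ (c : ℝ) (Y : Fin n → Fin m → ℝ),
        ∑ i, ∑ j, c * (Y i j * Real.log (M i j) + negMulLog (Y i j)) = c * entF M Y := by
      intro c Y
      simp [entF, Finset.mul_sum]
    have e2 : ∑ i, ∑ j, (if i = i₀ ∧ j = j₀ then t * σ i₀ j₀ * (-Real.log t) else 0)
        = t * σ i₀ j₀ * (-Real.log t) := by
      have hinner : ∀ i : Fin n,
          ∑ j, (if i = i₀ ∧ j = j₀ then t * σ i₀ j₀ * (-Real.log t) else 0)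
          = if i = i₀ then t * σ i₀ j₀ * (-Real.log t) else 0 := by
        intro i
        by_cases hi : i = i₀
        · simp [hi]
        · simp [hi]
      simp only [hinner]
      simp
    have h2 : ∑ i, ∑ j, ((1 - t) * (P i j * Real.log (M i j) + negMulLog (P i j))
        + t * (σ i j * Real.log (M i j) + negMulLog (σ i j))
        + (if i = i₀ ∧ j = j₀ then t * σ i₀ j₀ * (-Real.log t) else 0))
        = (1 - t) * entF M P + t * entF M σ + t * σ i₀ j₀ * (-Real.log t) := by
      simp only [Finset.sum_add_distrib]
      rw [e1, e1, e2]
    rw [← h2]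
    calc _ ≤ ∑ i, ∑ j, (Pt i j * Real.log (M i j) + negMulLog (Pt i j)) := h1
      _ = entF M Pt := rfl
  -- contradiction
  have hle : entF M Pt ≤ entF M P := hmax hPtK
  have hXval : σ i₀ j₀ * X = entF M P - entF M σ := by
    rw [hX, mul_comm, div_mul_cancel₀ _ (ne_of_gt (hσpos i₀ j₀))]
  have hbig : t * σ i₀ j₀ * (-Real.log t) ≥ t * σ i₀ j₀ * (X + 1) := by
    apply mul_le_mul_of_nonneg_left _ (le_of_lt (mul_pos ht0 (hσpos i₀ j₀)))
    linarith
  nlinarith [hσpos i₀ j₀, mul_pos ht0 (hσpos i₀ j₀)]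


/-- At an interior maximizer the "quadrilateral" optimality condition holds. -/
lemma maximizer_quad (M : Fin n → Fin m → ℝ)
    (p : Fin n → ℝ) (q : Fin m → ℝ)
    (P : Fin n → Fin m → ℝ) (hPK : P ∈ polyK p q)
    (hmax : IsMaxOn (entF M) (polyK p q) P) (hPpos : ∀ i j, 0 < P i j) :
    ∀ (i i' : Fin n) (j j' : Fin m),
      (Real.log (M i j) - Real.log (P i j)) + (Real.log (M i' j') - Real.log (P i' j'))
      = (Real.log (M i j') - Real.log (P i j'))
        + (Real.log (M i' j) - Real.log (P i' j)) := by
  obtain ⟨hPnn, hProw, hPcol⟩ := hPK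
  intro i i' j j'
  set v : Fin n → Fin m → ℝ := fun k l => Real.log (M k l) - Real.log (P k l) - 1 with hv
  set d1 : Fin n → ℝ := fun k => (if k = i then (1:ℝ) else 0) - (if k = i' then 1 else 0)
    with hd1
  set d2 : Fin m → ℝ := fun l => (if l = j then (1:ℝ) else 0) - (if l = j' then 1 else 0)
    with hd2
  have hd1sum : ∑ k, d1 k = 0 := by simp [hd1, Finset.sum_sub_distrib]
  have hd2sum : ∑ l, d2 l = 0 := by simp [hd2, Finset.sum_sub_distrib]
  have hd1abs : ∀ k, |d1 k| ≤ 1 := by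
    intro k; simp only [hd1]; split_ifs <;> norm_num
  have hd2abs : ∀ l, |d2 l| ≤ 1 := by
    intro l; simp only [hd2]; split_ifs <;> norm_num
  -- uniform lower bound on the entries of P
  have hne : (Finset.univ : Finset (Fin n × Fin m)).Nonempty := ⟨(i, j), mem_univ _⟩
  set ε : ℝ := Finset.univ.inf' hne (fun kl : Fin n × Fin m => P kl.1 kl.2) with hε
  have hεpos : 0 < ε := by
    rw [hε, Finset.lt_inf'_iff]
    exact fun kl _ => hPpos kl.1 kl.2
  have hεle : ∀ k l, ε ≤ P k l := fun k l =>
    Finset.inf'_le _ (mem_univ ((k, l) : Fin n × Fin m))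
  -- the perturbed family
  set g : ℝ → ℝ := fun t => entF M (fun k l => P k l + t * (d1 k * d2 l)) with hgdef
  -- derivative of g at 0
  have hgderiv : HasDerivAt g (∑ k, ∑ l, (d1 k * d2 l) * v k l) 0 := by
    have hterm : ∀ (k : Fin n) (l : Fin m), HasDerivAt
        (fun t : ℝ => (P k l + t * (d1 k * d2 l)) * Real.log (M k l)
          + negMulLog (P k l + t * (d1 k * d2 l)))
        ((d1 k * d2 l) * v k l) 0 := by
      intro k l
      have hu : HasDerivAt (fun t : ℝ => P k l + t * (d1 k * d2 l)) (d1 k * d2 l) 0 := by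
        simpa using ((hasDerivAt_id (0:ℝ)).mul_const (d1 k * d2 l)).const_add (P k l)
      have hx : P k l + (0:ℝ) * (d1 k * d2 l) = P k l := by ring
      have h1 : HasDerivAt (fun t : ℝ => (P k l + t * (d1 k * d2 l)) * Real.log (M k l))
          ((d1 k * d2 l) * Real.log (M k l)) 0 := hu.mul_const _
      have hlog : HasDerivAt negMulLog (-Real.log (P k l) - 1) (P k l) :=
        Real.hasDerivAt_negMulLog (ne_of_gt (hPpos k l))
      have hlog' : HasDerivAt negMulLog (-Real.log (P k l) - 1)
          (P k l + (0:ℝ) * (d1 k * d2 l)) := by rwa [hx]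
      have h2 := hlog'.comp (0:ℝ) hu
      have := h1.add h2
      rw [show d1 k * d2 l * v k l = d1 k * d2 l * Real.log (M k l)
          + (-Real.log (P k l) - 1) * (d1 k * d2 l) by simp only [hv]; ring]
      exact this
    have := HasDerivAt.fun_sum (u := (Finset.univ : Finset (Fin n)))
      (A := fun k => fun t : ℝ => ∑ l, ((P k l + t * (d1 k * d2 l)) * Real.log (M k l)
        + negMulLog (P k l + t * (d1 k * d2 l))))
      (A' := fun k => ∑ l, (d1 k * d2 l) * v k l) (x := 0)
      (fun k _ => HasDerivAt.fun_sum (fun l _ => hterm k l))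
    exact this
  -- g has a local maximum at 0
  have hloc : IsLocalMax g 0 := by
    have hg0 : g 0 = entF M P := by
      simp only [hgdef]
      congr 1
      funext k l
      ring
    filter_upwards [Metric.ball_mem_nhds (0:ℝ) hεpos] with t htball
    have habs : |t| < ε := by
      simpa [Real.dist_eq] using htball
    have hmem : (fun k l => P k l + t * (d1 k * d2 l)) ∈ polyK p q := by
      refine ⟨fun k l => ?_, fun k => ?_, fun l => ?_⟩
      · have h1 : |t * (d1 k * d2 l)| ≤ |t| := by
          rw [abs_mul]
          calc |t| * |d1 k * d2 l| ≤ |t| * 1 := by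
                apply mul_le_mul_of_nonneg_left _ (abs_nonneg t)
                rw [abs_mul]
                exact mul_le_one₀ (hd1abs k) (abs_nonneg _) (hd2abs l)
            _ = |t| := mul_one _
        have h2 : -(|t|) ≤ t * (d1 k * d2 l) := neg_le_of_abs_le h1 |>.trans_eq' rfl
        have h3 := hεle k l
        show 0 ≤ P k l + t * (d1 k * d2 l)
        linarith
      · have : ∑ l, (P k l + t * (d1 k * d2 l)) = (∑ l, P k l) + (t * d1 k) * ∑ l, d2 l := by
          rw [Finset.sum_add_distrib, Finset.mul_sum]
          congr 1
          exact Finset.sum_congr rfl fun l _ => by ring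
        rw [this, hd2sum, mul_zero, add_zero, hProw]
      · have : ∑ k, (P k l + t * (d1 k * d2 l)) = (∑ k, P k l) + (t * d2 l) * ∑ k, d1 k := by
          rw [Finset.sum_add_distrib, Finset.mul_sum]
          congr 1
          exact Finset.sum_congr rfl fun k _ => by ring
        rw [this, hd1sum, mul_zero, add_zero, hPcol]
    rw [hg0]
    exact hmax hmem
  -- hence the derivative vanishes
  have hD : ∑ k, ∑ l, (d1 k * d2 l) * v k l = 0 := hloc.hasDerivAt_eq_zero hgderiv
  -- simplify the derivative
  have hinner : ∀ k, ∑ l, (d1 k * d2 l) * v k l = d1 k * (v k j - v k j') := by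
    intro k
    have : ∑ l, (d1 k * d2 l) * v k l = d1 k * ∑ l, d2 l * v k l := by
      rw [Finset.mul_sum]
      exact Finset.sum_congr rfl fun l _ => by ring
    rw [this]
    congr 1
    simp [hd2, sub_mul, Finset.sum_sub_distrib, ite_mul]
  rw [Finset.sum_congr rfl fun k _ => hinner k] at hD
  have houter : ∑ k, d1 k * (v k j - v k j')
      = (v i j - v i j') - (v i' j - v i' j') := by
    simp [hd1, sub_mul, Finset.sum_sub_distrib, ite_mul]
  rw [houter] at hD
  simp only [hv] at hD
  linarith

lemma entF_continuous (M : Fin n → Fin m → ℝ) : Continuous (entF M) := by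
  apply continuous_finset_sum
  intro i _
  apply continuous_finset_sum
  intro j _
  have h1 : Continuous fun P : Fin n → Fin m → ℝ => P i j :=
    (continuous_apply j).comp (continuous_apply i)
  exact (h1.mul continuous_const).add (Real.continuous_negMulLog.comp h1)

lemma polyK_isCompact (p : Fin n → ℝ) (q : Fin m → ℝ) (hp : ∀ i, 0 < p i)
    (hpsum : ∑ i, p i = 1) : IsCompact (polyK p q) := by
  have hsub : polyK p q ⊆ Set.pi Set.univ fun _ : Fin n =>
      Set.pi Set.univ fun _ : Fin m => Set.Icc (0:ℝ) 1 := by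
    rintro P ⟨hpos, hrow, hcol⟩ i _ j _
    refine ⟨hpos i j, ?_⟩
    have h1 : P i j ≤ ∑ j', P i j' :=
      Finset.single_le_sum (fun j' _ => hpos i j') (mem_univ j)
    have h2 : p i ≤ ∑ i', p i' :=
      Finset.single_le_sum (fun i' _ => le_of_lt (hp i')) (mem_univ i)
    rw [hrow i] at h1
    linarith
  have hcompact : IsCompact (Set.pi Set.univ fun _ : Fin n =>
      Set.pi Set.univ fun _ : Fin m => Set.Icc (0:ℝ) 1) :=
    isCompact_univ_pi fun _ => isCompact_univ_pi fun _ => isCompact_Icc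
  apply hcompact.of_isClosed_subset _ hsub
  have heq : polyK p q = (⋂ i, ⋂ j, {P : Fin n → Fin m → ℝ | 0 ≤ P i j}) ∩
      ((⋂ i, {P : Fin n → Fin m → ℝ | ∑ j, P i j = p i}) ∩
       (⋂ j, {P : Fin n → Fin m → ℝ | ∑ i, P i j = q j})) := by
    ext P
    simp only [polyK, Set.mem_setOf_eq, Set.mem_inter_iff, Set.mem_iInter]
  rw [heq]
  have hc : ∀ (i : Fin n) (j : Fin m), Continuous fun P : Fin n → Fin m → ℝ => P i j :=
    fun i j => (continuous_apply j).comp (continuous_apply i)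
  refine IsClosed.inter ?_ (IsClosed.inter ?_ ?_)
  · exact isClosed_iInter fun i => isClosed_iInter fun j =>
      isClosed_le continuous_const (hc i j)
  · exact isClosed_iInter fun i =>
      isClosed_eq (continuous_finset_sum _ fun j _ => hc i j) continuous_const
  · exact isClosed_iInter fun j =>
      isClosed_eq (continuous_finset_sum _ fun i _ => hc i j) continuous_const


/-- Existence of a positive scaling of a positive matrix with prescribed positive
marginals of equal total mass one. -/
lemma exists_scaling (hn : 0 < n) (hm : 0 < m)
    (M : Fin n → Fin m → ℝ) (hM : ∀ i j, 0 < M i j)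
    (p : Fin n → ℝ) (q : Fin m → ℝ) (hp : ∀ i, 0 < p i) (hq : ∀ j, 0 < q j)
    (hpsum : ∑ i, p i = 1) (hqsum : ∑ j, q j = 1) :
    ∃ (a : Fin n → ℝ) (b : Fin m → ℝ), (∀ i, 0 < a i) ∧ (∀ j, 0 < b j) ∧
      (∀ i, ∑ j, a i * M i j * b j = p i) ∧ (∀ j, ∑ i, a i * M i j * b j = q j) := by
  have hKne : (polyK p q).Nonempty := by
    refine ⟨fun i j => p i * q j, fun i j => le_of_lt (mul_pos (hp i) (hq j)),
      fun i => ?_, fun j => ?_⟩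
    · rw [← Finset.mul_sum, hqsum, mul_one]
    · rw [← Finset.sum_mul, hpsum, one_mul]
  obtain ⟨P, hPK, hmax⟩ := (polyK_isCompact p q hp hpsum).exists_isMaxOn hKne
    (entF_continuous M).continuousOn
  have hPpos : ∀ i j, 0 < P i j := maximizer_pos M p q hp hq hpsum hqsum P hPK hmax
  have hquad := maximizer_quad M p q P hPK hmax hPpos
  set w : Fin n → Fin m → ℝ := fun k l => P k l / M k l with hwdef
  have hwpos : ∀ k l, 0 < w k l := fun k l => div_pos (hPpos k l) (hM k l)
  have hw : ∀ (i i' : Fin n) (j j' : Fin m), w i j * w i' j' = w i j' * w i' j := by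
    intro i i' j j'
    apply Real.log_injOn_pos (Set.mem_Ioi.mpr (mul_pos (hwpos i j) (hwpos i' j')))
      (Set.mem_Ioi.mpr (mul_pos (hwpos i j') (hwpos i' j)))
    rw [Real.log_mul (ne_of_gt (hwpos i j)) (ne_of_gt (hwpos i' j')),
      Real.log_mul (ne_of_gt (hwpos i j')) (ne_of_gt (hwpos i' j))]
    simp only [hwdef]
    rw [Real.log_div (ne_of_gt (hPpos i j)) (ne_of_gt (hM i j)),
      Real.log_div (ne_of_gt (hPpos i' j')) (ne_of_gt (hM i' j')),
      Real.log_div (ne_of_gt (hPpos i j')) (ne_of_gt (hM i j')),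
      Real.log_div (ne_of_gt (hPpos i' j)) (ne_of_gt (hM i' j))]
    linarith [hquad i i' j j']
  set i₀ : Fin n := ⟨0, hn⟩
  set j₀ : Fin m := ⟨0, hm⟩
  set a : Fin n → ℝ := fun i => w i j₀ with hadef
  set b : Fin m → ℝ := fun l => w i₀ l / w i₀ j₀ with hbdef
  have hapos : ∀ i, 0 < a i := fun i => hwpos i j₀
  have hbpos : ∀ l, 0 < b l := fun l => div_pos (hwpos i₀ l) (hwpos i₀ j₀)
  have hab : ∀ i l, a i * b l = w i l := by
    intro i l
    have h := hw i i₀ l j₀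
    simp only [hadef, hbdef, mul_div_assoc']
    rw [div_eq_iff (ne_of_gt (hwpos i₀ j₀))]
    linarith [h]
  have hPab : ∀ i l, a i * M i l * b l = P i l := by
    intro i l
    have h := hab i l
    have : w i l * M i l = P i l := by
      simp only [hwdef]
      rw [div_mul_cancel₀ _ (ne_of_gt (hM i l))]
    rw [show a i * M i l * b l = (a i * b l) * M i l from by ring, h, this]
  exact ⟨a, b, hapos, hbpos,
    fun i => by rw [Finset.sum_congr rfl fun l _ => hPab i l]; exact hPK.2.1 i,
    fun l => by rw [Finset.sum_congr rfl fun i _ => hPab i l]; exact hPK.2.2 l⟩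

end ExistsMain

lemma div_left_cancel'' {p x y : ℝ} (hp : p ≠ 0) (hx : x ≠ 0) (hy : y ≠ 0)
    (h : p / x = p / y) : x = y := by
  have h2 : p * y = p * x := by
    have := (div_eq_div_iff hx hy).mp h
    linarith
  exact (mul_left_cancel₀ hp h2).symm

lemma div_div_self'' {x y : ℝ} (hx : x ≠ 0) : x / (x / y) = y := by
  rw [div_div_eq_mul_div, mul_comm, mul_div_assoc, div_self hx, mul_one]

/-- existence and uniqueness (up to a common positive scaling)
of solutions of the discrete generalized Schrödinger system with killing. -/
theorem discrete_schroedinger_system_with_killing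
    {n : ℕ} (hn : 0 < n) (Q : Matrix (Fin n) (Fin n) ℝ)
    (hQ : ∀ i j, 0 < Q i j)
    (r : Fin n → ℝ) (hr : ∀ i, 0 < r i)
    (ρ₀ ρ₁ : Fin n → ℝ) (hρ₀ : ∀ i, 0 < ρ₀ i) (hρ₁ : ∀ i, 0 < ρ₁ i)
    (hρ₀sum : ∑ i, ρ₀ i = 1) (hρ₁sum : ∑ i, ρ₁ i < 1) :
    ∃ (φh₁ φ₀ : Fin n → ℝ) (ψh₁ ψ₀ : ℝ),
      (∀ i, 0 < φh₁ i) ∧ (∀ i, 0 < φ₀ i) ∧ 0 < ψh₁ ∧ 0 < ψ₀ ∧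
      -- the four Schrödinger equations
      (φh₁ = Qᵀ.mulVec (fun i => ρ₀ i / φ₀ i)) ∧
      (ψh₁ = ∑ i, (ρ₀ i / φ₀ i) * r i) ∧
      (φ₀ = Q.mulVec (fun i => ρ₁ i / φh₁ i)
              + ((1 - ∑ i, ρ₁ i) / ψh₁) • r) ∧
      (ψ₀ = (1 - ∑ i, ρ₁ i) / ψh₁) ∧
      -- uniqueness up to a common positive scaling
      (∀ (φh₁' φ₀' : Fin n → ℝ) (ψh₁' ψ₀' : ℝ),
        (∀ i, 0 < φh₁' i) → (∀ i, 0 < φ₀' i) → 0 < ψh₁' → 0 < ψ₀' →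
        (φh₁' = Qᵀ.mulVec (fun i => ρ₀ i / φ₀' i)) →
        (ψh₁' = ∑ i, (ρ₀ i / φ₀' i) * r i) →
        (φ₀' = Q.mulVec (fun i => ρ₁ i / φh₁' i)
                 + ((1 - ∑ i, ρ₁ i) / ψh₁') • r) →
        (ψ₀' = (1 - ∑ i, ρ₁ i) / ψh₁') →
        ∃ c : ℝ, 0 < c ∧ φh₁' = c • φh₁ ∧ ψh₁' = c * ψh₁ ∧
          φ₀' = c⁻¹ • φ₀ ∧ ψ₀' = c⁻¹ * ψ₀) := by
  set c₁ : ℝ := 1 - ∑ i, ρ₁ i with hc₁def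
  have hc₁ : 0 < c₁ := by rw [hc₁def]; linarith
  -- the extended (n × (n+1)) matrix and extended second marginal
  set M : Fin n → Fin (n+1) → ℝ := fun i => Fin.lastCases (r i) (Q i) with hMdef
  set qv : Fin (n+1) → ℝ := Fin.lastCases c₁ ρ₁ with hqvdef
  have hMcast : ∀ (i : Fin n) (j : Fin n), M i j.castSucc = Q i j := by
    intro i j; simp [hMdef]
  have hMlast : ∀ i : Fin n, M i (Fin.last n) = r i := by
    intro i; simp [hMdef]
  have hqvcast : ∀ j : Fin n, qv j.castSucc = ρ₁ j := by
    intro j; simp [hqvdef]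
  have hqvlast : qv (Fin.last n) = c₁ := by simp [hqvdef]
  have hM : ∀ i j, 0 < M i j := by
    intro i j
    induction j using Fin.lastCases with
    | last => rw [hMlast]; exact hr i
    | cast j => rw [hMcast]; exact hQ i j
  have hqv : ∀ j, 0 < qv j := by
    intro j
    induction j using Fin.lastCases with
    | last => rw [hqvlast]; exact hc₁
    | cast j => rw [hqvcast]; exact hρ₁ j
  have hqvsum : ∑ j, qv j = 1 := by
    rw [Fin.sum_univ_castSucc]
    simp only [hqvcast, hqvlast]
    rw [hc₁def]; ring
  obtain ⟨a, b, hapos, hbpos, hrowsum, hcolsum⟩ :=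
    exists_scaling hn (Nat.succ_pos n) M hM ρ₀ qv hρ₀ hqv hρ₀sum hqvsum
  -- the solution
  set φ₀ : Fin n → ℝ := fun i => ρ₀ i / a i with hφ₀def
  set φh₁ : Fin n → ℝ := fun j => ρ₁ j / b j.castSucc with hφh₁def
  set ψ₀ : ℝ := b (Fin.last n) with hψ₀def
  set ψh₁ : ℝ := c₁ / b (Fin.last n) with hψh₁def
  have hφ₀pos : ∀ i, 0 < φ₀ i := fun i => div_pos (hρ₀ i) (hapos i)
  have hφh₁pos : ∀ j, 0 < φh₁ j := fun j => div_pos (hρ₁ j) (hbpos j.castSucc)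
  have hψ₀pos : 0 < ψ₀ := hbpos _
  have hψh₁pos : 0 < ψh₁ := div_pos hc₁ (hbpos _)
  have hρφ : ∀ i, ρ₀ i / φ₀ i = a i := fun i =>
    div_div_self'' (ne_of_gt (hρ₀ i))
  have hρφh : ∀ j, ρ₁ j / φh₁ j = b j.castSucc := fun j =>
    div_div_self'' (ne_of_gt (hρ₁ j))
  have hψc : c₁ / ψh₁ = b (Fin.last n) := div_div_self'' (ne_of_gt hc₁)
  -- equation 1
  have heq1 : φh₁ = Qᵀ.mulVec (fun i => ρ₀ i / φ₀ i) := by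
    funext j
    have hc := hcolsum j.castSucc
    simp only [hMcast, hqvcast] at hc
    have hb := hbpos j.castSucc
    have : ∑ i, a i * Q i j * b j.castSucc = (∑ i, Q i j * a i) * b j.castSucc := by
      rw [Finset.sum_mul]; exact Finset.sum_congr rfl fun i _ => by ring
    rw [this] at hc
    simp only [Matrix.mulVec, Matrix.transpose_apply, dotProduct, hρφ]
    show ρ₁ j / b j.castSucc = ∑ x, Q x j * a x
    rw [div_eq_iff (ne_of_gt hb)]
    exact hc.symm
  -- equation 2
  have heq2 : ψh₁ = ∑ i, (ρ₀ i / φ₀ i) * r i := by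
    have hc := hcolsum (Fin.last n)
    simp only [hMlast, hqvlast] at hc
    have : ∑ i, a i * r i * b (Fin.last n) = (∑ i, a i * r i) * b (Fin.last n) := by
      rw [Finset.sum_mul]
    rw [this] at hc
    simp only [hρφ]
    rw [hψh₁def, eq_comm, eq_div_iff (ne_of_gt (hbpos (Fin.last n))), hc]
  -- equation 3
  have heq3 : φ₀ = Q.mulVec (fun i => ρ₁ i / φh₁ i) + (c₁ / ψh₁) • r := by
    funext i
    have hrs := hrowsum i
    rw [Fin.sum_univ_castSucc] at hrs
    simp only [hMcast, hMlast] at hrs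
    have hexp : ∑ j, a i * Q i j * b j.castSucc + a i * r i * b (Fin.last n)
        = a i * (∑ j, Q i j * b j.castSucc + r i * b (Fin.last n)) := by
      rw [mul_add, Finset.mul_sum]
      congr 1
      · exact Finset.sum_congr rfl fun j _ => by ring
      · ring
    rw [hexp] at hrs
    simp only [Pi.add_apply, Pi.smul_apply, smul_eq_mul, Matrix.mulVec, dotProduct,
      hρφh, hψc]
    rw [hφ₀def, eq_comm]
    rw [eq_div_iff (ne_of_gt (hapos i)), ← hrs]
    ring
  -- equation 4
  have heq4 : ψ₀ = c₁ / ψh₁ := by rw [hψc, hψ₀def]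
  refine ⟨φh₁, φ₀, ψh₁, ψ₀, hφh₁pos, hφ₀pos, hψh₁pos, hψ₀pos, heq1, heq2, heq3, heq4, ?_⟩
  -- uniqueness
  intro φh₁' φ₀' ψh₁' ψ₀' hφh₁'pos hφ₀'pos hψh₁'pos hψ₀'pos heq1' heq2' heq3' heq4'
  set a' : Fin n → ℝ := fun i => ρ₀ i / φ₀' i with ha'def
  set b' : Fin (n+1) → ℝ := Fin.lastCases (c₁ / ψh₁') (fun j => ρ₁ j / φh₁' j) with hb'def
  have hb'cast : ∀ j : Fin n, b' j.castSucc = ρ₁ j / φh₁' j := by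
    intro j; simp [hb'def]
  have hb'last : b' (Fin.last n) = c₁ / ψh₁' := by simp [hb'def]
  have ha'pos : ∀ i, 0 < a' i := fun i => div_pos (hρ₀ i) (hφ₀'pos i)
  have hb'pos : ∀ j, 0 < b' j := by
    intro j
    induction j using Fin.lastCases with
    | last => rw [hb'last]; exact div_pos hc₁ hψh₁'pos
    | cast j => rw [hb'cast]; exact div_pos (hρ₁ j) (hφh₁'pos j)
  -- primed marginals agree with unprimed ones
  have hrow' : ∀ i, ∑ j, a' i * M i j * b' j = ∑ j, a i * M i j * b j := by
    intro i
    rw [hrowsum i, Fin.sum_univ_castSucc]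
    simp only [hMcast, hMlast, hb'cast, hb'last]
    have hφ := congrFun heq3' i
    simp only [Pi.add_apply, Pi.smul_apply, smul_eq_mul, Matrix.mulVec, dotProduct] at hφ
    have hexp : ∑ j, a' i * Q i j * (ρ₁ j / φh₁' j) + a' i * r i * (c₁ / ψh₁')
        = a' i * (∑ j, Q i j * (ρ₁ j / φh₁' j) + (c₁ / ψh₁') * r i) := by
      rw [mul_add, Finset.mul_sum]
      have e1 : ∀ j : Fin n, a' i * (Q i j * (ρ₁ j / φh₁' j))
          = a' i * Q i j * (ρ₁ j / φh₁' j) := fun j => by ring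
      simp only [e1]
      ring
    rw [hexp, ← hφ]
    show ρ₀ i / φ₀' i * φ₀' i = ρ₀ i
    exact div_mul_cancel₀ _ (ne_of_gt (hφ₀'pos i))
  have hcol' : ∀ j, ∑ i, a' i * M i j * b' j = ∑ i, a i * M i j * b j := by
    intro j
    rw [hcolsum j]
    induction j using Fin.lastCases with
    | last =>
      simp only [hMlast, hb'last, hqvlast]
      have : ∑ i, a' i * r i * (c₁ / ψh₁') = (∑ i, a' i * r i) * (c₁ / ψh₁') := by
        rw [Finset.sum_mul]
      rw [this]
      have hsum' : ∑ i, a' i * r i = ψh₁' := by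
        rw [heq2']
      rw [hsum', mul_comm, div_mul_cancel₀ _ (ne_of_gt hψh₁'pos)]
    | cast j =>
      simp only [hMcast, hb'cast, hqvcast]
      have : ∑ i, a' i * Q i j * (ρ₁ j / φh₁' j)
          = (∑ i, Q i j * a' i) * (ρ₁ j / φh₁' j) := by
        rw [Finset.sum_mul]; exact Finset.sum_congr rfl fun i _ => by ring
      rw [this]
      have hsum' : ∑ i, Q i j * a' i = φh₁' j := by
        have := congrFun heq1' j
        simp only [Matrix.mulVec, Matrix.transpose_apply, dotProduct] at this
        rw [this]
      rw [hsum', mul_comm, div_mul_cancel₀ _ (ne_of_gt (hφh₁'pos j))]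
  obtain ⟨c, hcpos, hca, hcb⟩ := scaling_unique hn (Nat.succ_pos n) M hM a a' b b'
    hapos hbpos ha'pos hb'pos hrow' hcol'
  have hφh' : ∀ j, φh₁' j = c * φh₁ j := by
    intro j
    have h2 := hcb j.castSucc
    rw [hb'cast j, ← hρφh j] at h2
    have h3 : ρ₁ j / φh₁' j = ρ₁ j / (c * φh₁ j) := by
      rw [h2, inv_mul_eq_div, div_div, mul_comm (φh₁ j) c]
    exact div_left_cancel'' (ne_of_gt (hρ₁ j)) (ne_of_gt (hφh₁'pos j))
      (ne_of_gt (mul_pos hcpos (hφh₁pos j))) h3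
  have hψh' : ψh₁' = c * ψh₁ := by
    have h2 := hcb (Fin.last n)
    rw [hb'last, ← hψc] at h2
    have h3 : c₁ / ψh₁' = c₁ / (c * ψh₁) := by
      rw [h2, inv_mul_eq_div, div_div, mul_comm ψh₁ c]
    exact div_left_cancel'' (ne_of_gt hc₁) (ne_of_gt hψh₁'pos)
      (ne_of_gt (mul_pos hcpos hψh₁pos)) h3
  refine ⟨c, hcpos, ?_, hψh', ?_, ?_⟩
  · funext j
    rw [Pi.smul_apply, smul_eq_mul]
    exact hφh' j
  · funext i
    have h1 := hca i
    have h4 : φ₀' i = ρ₀ i / a' i := (div_div_self'' (ne_of_gt (hρ₀ i))).symm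
    rw [Pi.smul_apply, smul_eq_mul, h4, h1, show φ₀ i = ρ₀ i / a i from rfl]
    rw [inv_mul_eq_div, div_div, mul_comm c (a i)]
  · rw [heq4', hψh', hψ₀def, ← hψc]
    rw [inv_mul_eq_div, div_div, mul_comm c ψh₁]
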